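/- With G_n = ∑_{k=0}^{n} (C(2k,k)/4^k)² (the n-th Landau constant), the limit α_∞ := lim_{n→∞} (G_{n−1} − log(n)/π) exists and equals (γ + log 16)/π, where γ is the Euler–Mascheroni constant. -/

import Mathlib

open Real Filter Finset MeasureTheory Topology Set

noncomputable def dd (k : ℕ) : ℝ := (Nat.choose (2*k) k : ℝ) / 4^k

lemma dd_zero : dd 0 = 1 := by simp [dd]

lemma dd_succ (k : ℕ) : dd (k+1) = dd k * ((2*k+1)/(2*k+2)) := by
  have h := Nat.succ_mul_centralBinom_succ k
  have h' : ((k:ℝ)+1) * (Nat.centralBinom (k+1) : ℝ) = 2 * (2*k+1) * Nat.centralBinom k := by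
    exact_mod_cast congrArg (Nat.cast : ℕ → ℝ) h
  have hcb : ∀ n : ℕ, (Nat.centralBinom n : ℝ) = (Nat.choose (2*n) n : ℝ) := fun n => rfl
  rw [hcb, hcb] at h'
  have hk1 : ((k:ℝ)+1) ≠ 0 := by positivity
  simp only [dd]
  rw [pow_succ]
  rw [div_mul_div_comm, div_eq_div_iff (by positivity) (by positivity)]
  linear_combination (2 * (4:ℝ)^k) * h'

lemma dd_pos (k : ℕ) : 0 < dd k := by
  induction k with
  | zero => simp [dd_zero]
  | succ n ih => rw [dd_succ]; positivity

lemma dd_le_one (k : ℕ) : dd k ≤ 1 := by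
  induction k with
  | zero => simp [dd_zero]
  | succ n ih =>
    rw [dd_succ]
    have h1 : (2*(n:ℝ)+1)/(2*n+2) ≤ 1 := by
      rw [div_le_one (by positivity)]; linarith
    nlinarith [dd_pos n]

lemma refl_half (m : ℕ) : ∑ j ∈ range (m+1), (j:ℝ) * (dd j * dd (m-j))
    = (m:ℝ)/2 * ∑ j ∈ range (m+1), dd j * dd (m-j) := by
  have h := Finset.sum_range_reflect (fun j => (j:ℝ) * (dd j * dd (m-j))) (m+1)
  simp only [Nat.add_sub_cancel] at h
  have h2 : ∑ j ∈ range (m+1), ((m-j:ℕ):ℝ) * (dd (m-j) * dd (m-(m-j)))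
      = ∑ j ∈ range (m+1), ((m:ℝ) - j) * (dd j * dd (m-j)) := by
    apply Finset.sum_congr rfl
    intro j hj
    simp only [Finset.mem_range] at hj
    have hj' : j ≤ m := by omega
    rw [Nat.sub_sub_self hj', Nat.cast_sub hj']
    ring
  rw [h2] at h
  have h3 : ∑ j ∈ range (m+1), ((m:ℝ) - j) * (dd j * dd (m-j))
      = (m:ℝ) * ∑ j ∈ range (m+1), dd j * dd (m-j)
        - ∑ j ∈ range (m+1), (j:ℝ) * (dd j * dd (m-j)) := by
    rw [Finset.mul_sum, ← Finset.sum_sub_distrib]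
    apply Finset.sum_congr rfl; intros; ring
  rw [h3] at h
  linarith

lemma dd_conv (k : ℕ) : ∑ j ∈ range (k+1), dd j * dd (k-j) = 1 := by
  induction k with
  | zero => simp [dd_zero]
  | succ n ih =>
    have key : ((n:ℝ)+1) * ∑ j ∈ range (n+2), dd j * dd (n+1-j)
        = 2 * ∑ j ∈ range (n+2), (j:ℝ) * (dd j * dd (n+1-j)) := by
      have := refl_half (n+1)
      push_cast at this ⊢
      linarith [this]
    have shift : ∑ j ∈ range (n+2), (j:ℝ) * (dd j * dd (n+1-j))
        = ∑ i ∈ range (n+1), ((i:ℝ)+1) * (dd (i+1) * dd (n-i)) := by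
      rw [Finset.sum_range_succ'] -- ∑_{j<n+2} f j = ∑_{i<n+1} f (i+1) + f 0
      simp
    have step : ∀ i : ℕ, ((i:ℝ)+1) * dd (i+1) = dd i * ((i:ℝ) + 1/2) := by
      intro i
      rw [dd_succ]
      field_simp
    have shift2 : ∑ i ∈ range (n+1), ((i:ℝ)+1) * (dd (i+1) * dd (n-i))
        = ∑ i ∈ range (n+1), (i:ℝ) * (dd i * dd (n-i))
          + (1/2) * ∑ i ∈ range (n+1), dd i * dd (n-i) := by
      rw [Finset.mul_sum, ← Finset.sum_add_distrib]
      apply Finset.sum_congr rfl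
      intro i _
      have := step i
      linear_combination dd (n-i) * this
    have final : ((n:ℝ)+1) * ∑ j ∈ range (n+2), dd j * dd (n+1-j) = (n:ℝ)+1 := by
      rw [key, shift, shift2, refl_half n, ih]
      ring
    have hne : ((n:ℝ)+1) ≠ 0 := by positivity
    field_simp at final
    exact final

lemma summable_dd (u : ℝ) (h0 : 0 ≤ u) (h1 : u < 1) : Summable (fun k => dd k * u^k) := by
  apply Summable.of_nonneg_of_le (fun k => mul_nonneg (dd_pos k).le (pow_nonneg h0 k))
    (fun k => ?_) (summable_geometric_of_lt_one h0 h1)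
  calc dd k * u^k ≤ 1 * u^k := by
        apply mul_le_mul_of_nonneg_right (dd_le_one k) (pow_nonneg h0 k)
    _ = u^k := one_mul _

lemma hasSum_dd (u : ℝ) (h0 : 0 ≤ u) (h1 : u < 1) :
    HasSum (fun k => dd k * u^k) (1 / √(1-u)) := by
  have hs := summable_dd u h0 h1
  set g := ∑' k, dd k * u^k with hg
  have hnorm : Summable (fun k => ‖dd k * u^k‖) := by
    apply hs.congr
    intro k
    rw [Real.norm_of_nonneg (mul_nonneg (dd_pos k).le (pow_nonneg h0 k))]
  have hsq : g * g = (1-u)⁻¹ := by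
    rw [hg, tsum_mul_tsum_eq_tsum_sum_range_of_summable_norm hnorm hnorm]
    have : ∀ n : ℕ, ∑ k ∈ range (n+1), (dd k * u^k) * (dd (n-k) * u^(n-k)) = u^n := by
      intro n
      have : ∀ k ∈ range (n+1), (dd k * u^k) * (dd (n-k) * u^(n-k))
          = (dd k * dd (n-k)) * u^n := by
        intro k hk
        simp only [Finset.mem_range] at hk
        have hk' : k ≤ n := by omega
        rw [show u^n = u^k * u^(n-k) by rw [← pow_add]; congr 1; omega]
        ring
      rw [Finset.sum_congr rfl this, ← Finset.sum_mul, dd_conv, one_mul]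
    rw [tsum_congr this, tsum_geometric_of_lt_one h0 h1]
  have hgpos : 0 < g := by
    have h00 : (0:ℝ) < dd 0 * u^0 := by simp [dd_zero]
    exact Summable.tsum_pos hs (fun k => mul_nonneg (dd_pos k).le (pow_nonneg h0 k)) 0 h00
  have h1u : (0:ℝ) < 1 - u := by linarith
  have : g = 1 / √(1-u) := by
    have : g = √(g*g) := by rw [Real.sqrt_mul_self hgpos.le]
    rw [this, hsq, Real.sqrt_inv, one_div]
  rw [← this]
  exact hs.hasSum

noncomputable def bb (k : ℕ) : ℝ := dd k ^ 2

lemma bb_pos (k : ℕ) : 0 < bb k := pow_pos (dd_pos k) 2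
lemma bb_zero : bb 0 = 1 := by simp [bb, dd_zero]
lemma bb_succ (k : ℕ) : bb (k+1) = bb k * ((2*k+1)/(2*k+2))^2 := by
  simp only [bb, dd_succ]; ring

noncomputable def WW (k : ℕ) : ℝ :=
  ∏ i ∈ range k, ((2:ℝ) * i + 2) / (2 * i + 1) * ((2 * i + 2) / (2 * i + 3))

lemma wallis_id (k : ℕ) : bb k * (2*k+1) * WW k = 1 := by
  induction k with
  | zero => simp [bb_zero, WW]
  | succ n ih =>
    have hW : WW (n+1) = WW n * (((2:ℝ)*n+2)/(2*n+1) * ((2*n+2)/(2*n+3))) := by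
      rw [WW, Finset.prod_range_succ]; push_cast; rfl
    have h1 : (2*(n:ℝ)+1) ≠ 0 := by positivity
    have h2 : (2*(n:ℝ)+2) ≠ 0 := by positivity
    have h3 : (2*(n:ℝ)+3) ≠ 0 := by positivity
    have e : bb (n+1) * (2*((n:ℝ)+1)+1) * WW (n+1) = bb n * (2*(n:ℝ)+1) * WW n := by
      rw [hW, bb_succ]
      field_simp
      ring
    push_cast
    rw [e]
    exact ih

lemma tendsto_WW_inv : Tendsto (fun k => (WW k)⁻¹) atTop (𝓝 (2/π)) := by
  have h := Real.tendsto_prod_pi_div_two.inv₀ (by positivity : (π/2 : ℝ) ≠ 0)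
  simpa [WW, one_div] using h

lemma tendsto_two_k_bb : Tendsto (fun k : ℕ => (2*(k:ℝ)+1) * bb k) atTop (𝓝 (2/π)) := by
  apply tendsto_WW_inv.congr
  intro k
  have h := wallis_id k
  have hW : WW k ≠ 0 := by
    intro h0; rw [h0, mul_zero] at h; norm_num at h
  field_simp
  linarith [h]

lemma tendsto_pi_k_bb (c : ℝ) :
    Tendsto (fun k : ℕ => π * ((k:ℝ) + c) * bb k) atTop (𝓝 1) := by
  have h2k : Tendsto (fun k : ℕ => 2*(k:ℝ)+1) atTop atTop := by
    apply tendsto_atTop_add_const_right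
    exact tendsto_natCast_atTop_atTop.const_mul_atTop two_pos
  have hfrac : Tendsto (fun k : ℕ => ((k:ℝ)+c)/(2*(k:ℝ)+1)) atTop (𝓝 (1/2)) := by
    have h0 : Tendsto (fun k : ℕ => (1:ℝ)/(2*(k:ℝ)+1)) atTop (𝓝 0) :=
      tendsto_const_nhds.div_atTop h2k
    have := (h0.const_mul (c - 1/2)).const_add (1/2)
    simp only [mul_zero, add_zero] at this
    apply this.congr
    intro k
    have hne : (2*(k:ℝ)+1) ≠ 0 := by positivity
    field_simp
    ring
  have := (tendsto_two_k_bb.mul hfrac).const_mul π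
  have heq : π * (2/π * (1/2)) = 1 := by
    field_simp
  rw [heq] at this
  apply this.congr
  intro k
  have hne : (2*(k:ℝ)+1) ≠ 0 := by positivity
  field_simp

lemma bb_upper (k : ℕ) : π * ((k:ℝ) + 1/4) * bb k ≤ 1 := by
  have hmono : Monotone (fun k : ℕ => π * ((k:ℝ) + 1/4) * bb k) := by
    apply monotone_nat_of_le_succ
    intro n
    rw [bb_succ, div_pow]
    have hb := bb_pos n
    have h2 : (0:ℝ) < (2*(n:ℝ)+2)^2 := by positivity
    have key : ((n:ℝ) + 1/4) * (2*(n:ℝ)+2)^2 ≤ ((n:ℝ)+1+1/4) * (2*(n:ℝ)+1)^2 := by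
      nlinarith [Nat.cast_nonneg (α := ℝ) n]
    push_cast
    rw [show π * (((n:ℝ)+1) + 1/4) * (bb n * ((2*(n:ℝ)+1)^2/(2*(n:ℝ)+2)^2))
        = (π * (((n:ℝ)+1) + 1/4) * bb n * (2*(n:ℝ)+1)^2) / (2*(n:ℝ)+2)^2 by ring,
      le_div_iff₀ h2]
    nlinarith [key, mul_pos pi_pos hb]
  exact hmono.ge_of_tendsto (tendsto_pi_k_bb (1/4)) k

lemma bb_lower (k : ℕ) : 1 ≤ π * ((k:ℝ) + 1/3) * bb k := by
  have hanti : Antitone (fun k : ℕ => π * ((k:ℝ) + 1/3) * bb k) := by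
    apply antitone_nat_of_succ_le
    intro n
    rw [bb_succ, div_pow]
    have hb := bb_pos n
    have h2 : (0:ℝ) < (2*(n:ℝ)+2)^2 := by positivity
    have key : ((n:ℝ)+1+1/3) * (2*(n:ℝ)+1)^2 ≤ ((n:ℝ) + 1/3) * (2*(n:ℝ)+2)^2 := by
      nlinarith [Nat.cast_nonneg (α := ℝ) n]
    push_cast
    rw [show π * (((n:ℝ)+1) + 1/3) * (bb n * ((2*(n:ℝ)+1)^2/(2*(n:ℝ)+2)^2))
        = (π * (((n:ℝ)+1) + 1/3) * bb n * (2*(n:ℝ)+1)^2) / (2*(n:ℝ)+2)^2 by ring,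
      div_le_iff₀ h2]
    nlinarith [key, mul_pos pi_pos hb]
  exact hanti.le_of_tendsto (tendsto_pi_k_bb (1/3)) k

lemma prod_dd (k : ℕ) : ∏ i ∈ range k, (2*(i:ℝ)+1)/(2*i+2) = dd k := by
  induction k with
  | zero => simp [dd_zero]
  | succ n ih => rw [Finset.prod_range_succ, ih, ← dd_succ]

lemma integral_sin_pow_half (k : ℕ) :
    ∫ θ in (0:ℝ)..(π/2), sin θ ^ (2*k) = π/2 * dd k := by
  have hfull : ∫ θ in (0:ℝ)..π, sin θ ^ (2*k) = π * dd k := by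
    rw [integral_sin_pow_even, prod_dd]
  have hcont : ∀ a b : ℝ, IntervalIntegrable (fun θ => sin θ ^ (2*k)) volume a b :=
    fun a b => (Continuous.pow (Real.continuous_sin) _).intervalIntegrable a b
  have hsplit : (∫ θ in (0:ℝ)..(π/2), sin θ ^ (2*k)) + ∫ θ in (π/2)..π, sin θ ^ (2*k)
      = ∫ θ in (0:ℝ)..π, sin θ ^ (2*k) :=
    intervalIntegral.integral_add_adjacent_intervals (hcont 0 (π/2)) (hcont (π/2) π)
  have hrefl : ∫ θ in (π/2)..π, sin θ ^ (2*k) = ∫ θ in (0:ℝ)..(π/2), sin θ ^ (2*k) := by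
    have h := intervalIntegral.integral_comp_sub_left (a := 0) (b := π/2)
      (fun x => sin x ^ (2*k)) π
    simp only [Real.sin_pi_sub] at h
    have h2 : π - π/2 = π/2 := by ring
    have h3 : π - 0 = π := by ring
    rw [h2, h3] at h
    exact h.symm
  rw [hrefl] at hsplit
  linarith [hfull, hsplit]

lemma integral_sin_pow_Ioo (k : ℕ) :
    ∫ θ in Set.Ioo (0:ℝ) (π/2), sin θ ^ (2*k) = π/2 * dd k := by
  rw [← integral_sin_pow_half k, intervalIntegral.integral_of_le (by positivity),
    MeasureTheory.integral_Ioc_eq_integral_Ioo]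

lemma hasSum_bb_integral (x : ℝ) (h0 : 0 ≤ x) (h1 : x < 1) :
    HasSum (fun k => bb k * x^k)
      ((2/π) * ∫ θ in Set.Ioo (0:ℝ) (π/2), 1 / √(1 - x * sin θ ^ 2)) := by
  set F : ℕ → ℝ → ℝ := fun k θ => dd k * x^k * sin θ ^ (2*k) with hF
  have hFcont : ∀ k, Continuous (F k) := by
    intro k; exact (continuous_const.mul ((Real.continuous_sin).pow _))
  have hFnonneg : ∀ k θ, 0 ≤ F k θ := by
    intro k θ
    have : (0:ℝ) ≤ sin θ ^ (2*k) := by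
      rw [show 2*k = k*2 by ring, pow_mul]; positivity
    have := dd_pos k
    positivity
  have hmeas : MeasurableSet (Set.Ioo (0:ℝ) (π/2)) := measurableSet_Ioo
  have hFint : ∀ k, Integrable (F k) (volume.restrict (Set.Ioo (0:ℝ) (π/2))) := by
    intro k
    exact ((hFcont k).intervalIntegrable 0 (π/2)).1.mono_set Set.Ioo_subset_Ioc_self
  have hFval : ∀ k, ∫ θ in Set.Ioo (0:ℝ) (π/2), F k θ = π/2 * (bb k * x^k) := by
    intro k
    simp only [hF]
    rw [MeasureTheory.integral_const_mul, integral_sin_pow_Ioo]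
    simp [bb]; ring
  have hFsum : Summable (fun k => ∫ θ in Set.Ioo (0:ℝ) (π/2), ‖F k θ‖) := by
    have : ∀ k, (∫ θ in Set.Ioo (0:ℝ) (π/2), ‖F k θ‖) = π/2 * (bb k * x^k) := by
      intro k
      rw [← hFval k]
      apply MeasureTheory.integral_congr_ae
      filter_upwards with θ
      exact Real.norm_of_nonneg (hFnonneg k θ)
    rw [funext this]
    apply Summable.mul_left
    apply Summable.of_nonneg_of_le
      (fun k => mul_nonneg (bb_pos k).le (pow_nonneg h0 k)) (fun k => ?_)
      (summable_geometric_of_lt_one h0 h1)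
    calc bb k * x^k ≤ 1 * x^k := by
          apply mul_le_mul_of_nonneg_right _ (pow_nonneg h0 k)
          calc bb k = dd k ^ 2 := rfl
            _ ≤ 1^2 := by
                apply pow_le_pow_left₀ (dd_pos k).le (dd_le_one k)
            _ = 1 := one_pow 2
      _ = x^k := one_mul _
  have key := MeasureTheory.hasSum_integral_of_summable_integral_norm hFint hFsum
  have hptw : ∀ θ : ℝ, (∑' k, F k θ) = 1 / √(1 - x * sin θ ^ 2) := by
    intro θ
    have hu0 : 0 ≤ x * sin θ ^ 2 := by positivity
    have hu1 : x * sin θ ^ 2 < 1 := by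
      have hs : sin θ ^ 2 ≤ 1 := sin_sq_le_one θ
      nlinarith
    have := hasSum_dd (x * sin θ ^ 2) hu0 hu1
    have heq : ∀ k, dd k * (x * sin θ ^ 2)^k = F k θ := by
      intro k
      simp only [hF, mul_pow, ← pow_mul]
      ring
    rw [← (this.congr_fun (fun k => (heq k).symm)).tsum_eq]
  have : (∫ θ in Set.Ioo (0:ℝ) (π/2), ∑' k, F k θ)
      = ∫ θ in Set.Ioo (0:ℝ) (π/2), 1 / √(1 - x * sin θ ^ 2) := by
    apply MeasureTheory.integral_congr_ae
    filter_upwards with θ using hptw θ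
  rw [funext hFval, this] at key
  have hπ : (π/2 : ℝ) ≠ 0 := by positivity
  have h2 := key.mul_left (2/π)
  have heq2 : (fun i => 2/π * (π/2 * (bb i * x^i))) = fun i => bb i * x^i := by
    funext i
    field_simp
  rw [heq2] at h2
  exact h2

noncomputable def G (m : ℝ) (u : ℝ) : ℝ := (√(1+u^2) * √(1+m^4*u^2))⁻¹

lemma G_cont (m : ℝ) : Continuous (G m) := by
  apply Continuous.inv₀
  · exact (continuous_const.add (continuous_id.pow 2)).sqrt.mul
      ((continuous_const.add (continuous_const.mul (continuous_id.pow 2))).sqrt)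
  · intro u
    have h1 : (0:ℝ) < 1 + u^2 := by positivity
    have h2 : (0:ℝ) < 1 + m^4*u^2 := by nlinarith [sq_nonneg (m^2*u)]
    positivity

lemma G_nonneg (m u : ℝ) : 0 ≤ G m u := by
  unfold G; positivity

lemma G_pos (m u : ℝ) : 0 < G m u := by
  unfold G
  have h1 : (0:ℝ) < 1 + u^2 := by positivity
  have h2 : (0:ℝ) < 1 + m^4*u^2 := by nlinarith [sq_nonneg (m^2*u)]
  positivity

lemma G_le (m : ℝ) (hm : 0 < m) (hm1 : m ≤ 1) (u : ℝ) :
    G m u ≤ (m^2)⁻¹ * (1+u^2)⁻¹ := by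
  unfold G
  have h1 : (0:ℝ) < 1 + u^2 := by positivity
  have h2 : m^4*(1+u^2) ≤ 1 + m^4*u^2 := by nlinarith [pow_pos hm 4, pow_le_one₀ hm.le hm1 (n:=4)]
  have h3 : √(m^4*(1+u^2)) ≤ √(1+m^4*u^2) := Real.sqrt_le_sqrt h2
  have h4 : √(m^4*(1+u^2)) = m^2 * √(1+u^2) := by
    rw [Real.sqrt_mul (by positivity), show m^4 = (m^2)^2 by ring, Real.sqrt_sq (by positivity)]
  have h5 : m^2 * √(1+u^2) * √(1+u^2) ≤ √(1+u^2) * √(1+m^4*u^2) := by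
    rw [← h4] at *
    apply mul_le_mul_of_nonneg_left h3 (Real.sqrt_nonneg _) |>.trans_eq' ?_
    ring
  rw [← mul_inv]
  apply inv_anti₀
  · positivity
  · calc m^2 * (1+u^2) = m^2 * √(1+u^2) * √(1+u^2) := by
          rw [mul_assoc, Real.mul_self_sqrt h1.le]
      _ ≤ _ := h5

lemma G_integrableOn (m : ℝ) (hm : 0 < m) (hm1 : m ≤ 1) (s : Set ℝ) :
    IntegrableOn (G m) s := by
  apply Integrable.integrableOn
  apply Integrable.mono' (integrable_inv_one_add_sq.const_mul ((m^2)⁻¹))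
    (G_cont m).aestronglyMeasurable
  filter_upwards with u
  rw [Real.norm_of_nonneg (G_nonneg m u)]
  exact G_le m hm hm1 u

-- tan substitution
lemma tan_image : Real.tan '' (Ioo 0 (π/2)) = Ioi (0:ℝ) := by
  ext y
  constructor
  · rintro ⟨θ, hθ, rfl⟩
    exact Real.tan_pos_of_pos_of_lt_pi_div_two hθ.1 hθ.2
  · intro hy
    refine ⟨Real.arctan y, ⟨?_, Real.arctan_lt_pi_div_two y⟩, Real.tan_arctan y⟩
    have := Real.arctan_strictMono hy
    rwa [Real.arctan_zero] at this

lemma subst_tan (x : ℝ) (h0 : 0 ≤ x) (h1 : x < 1) (m : ℝ) (hm : 0 < m) (hmx : m^4 = 1 - x) :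
    ∫ θ in Ioo (0:ℝ) (π/2), 1 / √(1 - x * Real.sin θ ^ 2) = ∫ u in Ioi (0:ℝ), G m u := by
  have hsub := integral_image_eq_integral_abs_deriv_smul (f := Real.tan)
    (f' := fun θ => 1 / Real.cos θ ^ 2) (measurableSet_Ioo (a := (0:ℝ)) (b := π/2))
    (fun θ hθ => ?_) ?_ (G m)
  · rw [tan_image] at hsub
    rw [hsub]
    apply MeasureTheory.setIntegral_congr_fun measurableSet_Ioo
    intro θ hθ
    have hc : 0 < Real.cos θ := Real.cos_pos_of_mem_Ioo ⟨by linarith [hθ.1, pi_pos], hθ.2⟩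
    have hs : 0 ≤ Real.sin θ := Real.sin_nonneg_of_nonneg_of_le_pi hθ.1.le
      (by linarith [hθ.2, pi_pos])
    have hc2 : Real.cos θ ^ 2 = 1 - Real.sin θ ^ 2 := by
      rw [Real.cos_sq']
    have htan : Real.tan θ = Real.sin θ / Real.cos θ := Real.tan_eq_sin_div_cos θ
    have hcne : Real.cos θ ≠ 0 := hc.ne'
    have hsne : (1:ℝ) - Real.sin θ ^ 2 ≠ 0 := by
      rw [← hc2]; positivity
    have h1t : 1 + Real.tan θ ^ 2 = (Real.cos θ ^ 2)⁻¹ := by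
      rw [htan, div_pow, hc2]
      field_simp
      ring
    have h2t : 1 + m^4 * Real.tan θ ^ 2 = (1 - x * Real.sin θ ^ 2) / Real.cos θ ^ 2 := by
      rw [htan, div_pow, hmx]
      field_simp
      nlinarith [Real.sin_sq_add_cos_sq θ]
    have hpos : 0 < 1 - x * Real.sin θ ^ 2 := by
      nlinarith [Real.sin_sq_le_one θ]
    simp only [smul_eq_mul, G, h1t, h2t]
    rw [Real.sqrt_inv, Real.sqrt_sq hc.le, Real.sqrt_div hpos.le, Real.sqrt_sq hc.le,
      abs_of_pos (by positivity)]
    have hsq : 0 < √(1 - x * Real.sin θ ^ 2) := Real.sqrt_pos.mpr hpos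
    field_simp
  · exact (Real.hasDerivAt_tan (by
      have hc : 0 < Real.cos θ := Real.cos_pos_of_mem_Ioo ⟨by linarith [hθ.1, pi_pos], hθ.2⟩
      exact hc.ne')).hasDerivWithinAt
  · apply Real.injOn_tan.mono
    intro θ hθ
    rw [Set.mem_Ioo] at hθ ⊢
    exact ⟨by linarith [hθ.1, half_pos pi_pos], hθ.2⟩

lemma G_reflect (m : ℝ) (hm : 0 < m) (u : ℝ) (hu : 0 < u) :
    (m^2 * u^2)⁻¹ * G m ((m^2 * u)⁻¹) = G m u := by
  unfold G
  have h1 : (0:ℝ) < 1 + u^2 := by positivity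
  have h2 : (0:ℝ) < 1 + m^4*u^2 := by positivity
  have e1 : 1 + ((m^2*u)⁻¹)^2 = (1 + m^4*u^2) / (m^4*u^2) := by
    field_simp
    ring
  have e2 : 1 + m^4 * ((m^2*u)⁻¹)^2 = (1 + u^2) / u^2 := by
    field_simp
    ring
  rw [e1, e2, Real.sqrt_div h2.le, Real.sqrt_div h1.le]
  rw [show m^4*u^2 = (m^2*u)^2 by ring, Real.sqrt_sq (by positivity), Real.sqrt_sq hu.le]
  have s1 : 0 < √(1+u^2) := Real.sqrt_pos.mpr h1
  have s2 : 0 < √(1+m^4*u^2) := Real.sqrt_pos.mpr h2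
  field_simp

lemma reflect_image (m : ℝ) (hm : 0 < m) :
    (fun u : ℝ => (m^2 * u)⁻¹) '' (Ioi (1/m)) = Ioo 0 (1/m) := by
  ext y
  simp only [Set.mem_image, Set.mem_Ioi, Set.mem_Ioo]
  constructor
  · rintro ⟨u, hu, rfl⟩
    have hum : 0 < u := lt_trans (by positivity) hu
    constructor
    · positivity
    · have h1 : 1/m < u := hu
      have : m^2 * u > m^2 * (1/m) := by
        apply mul_lt_mul_of_pos_left h1 (by positivity)
      have hmu : m^2 * (1/m) = m := by field_simp
      rw [inv_lt_comm₀ (by positivity) (by positivity)]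
      rw [one_div, inv_inv]
      calc m = m^2 * (1/m) := hmu.symm
        _ < m^2 * u := this
  · rintro ⟨hy0, hy⟩
    refine ⟨(m^2 * y)⁻¹, ?_, ?_⟩
    · rw [lt_inv_comm₀ (by positivity) (by positivity)]
      calc (1/m)⁻¹ = m := by rw [one_div, inv_inv]
        _ = m^2 * (1/m) := by field_simp
        _ > m^2 * y := by apply mul_lt_mul_of_pos_left hy (by positivity)
    · rw [mul_inv, inv_inv]
      field_simp

lemma A_split (m : ℝ) (hm : 0 < m) (hm1 : m ≤ 1) :
    ∫ u in Ioi (0:ℝ), G m u = 2 * ∫ u in Ioo (0:ℝ) (1/m), G m u := by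
  have hrefl : ∫ u in Ioo (0:ℝ) (1/m), G m u = ∫ u in Ioi (1/m), G m u := by
    have hsub := integral_image_eq_integral_abs_deriv_smul
      (f := fun u : ℝ => (m^2 * u)⁻¹) (f' := fun u => -(m^2*u^2)⁻¹)
      (measurableSet_Ioi (a := 1/m)) (fun u hu => ?_) ?_ (G m)
    · rw [reflect_image m hm] at hsub
      rw [hsub]
      apply MeasureTheory.setIntegral_congr_fun measurableSet_Ioi
      intro u hu
      have hu0 : 0 < u := lt_trans (by positivity) hu
      have hG := G_reflect m hm u hu0
      simp only [smul_eq_mul, abs_neg]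
      rw [abs_of_pos (by positivity)]
      exact hG
    · have hu0 : 0 < u := lt_trans (by positivity) hu
      have h0 : HasDerivAt (fun u : ℝ => m^2*u) (m^2) u := by
        simpa using (hasDerivAt_id u).const_mul (m^2)
      have h := h0.inv (by positivity : m^2*u ≠ 0)
      have heq : -m^2 / (m^2*u)^2 = -(m^2*u^2)⁻¹ := by
        field_simp
      rw [heq] at h
      exact h.hasDerivWithinAt
    · intro a ha b hb hab
      simp only [Set.mem_Ioi] at ha hb
      have ha0 : 0 < a := lt_trans (by positivity) ha
      have hb0 : 0 < b := lt_trans (by positivity) hb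
      have : (m^2*a) = (m^2*b) := by
        have := congrArg (·⁻¹) hab
        simpa using this
      exact mul_left_cancel₀ (by positivity) this
  have hsplit : ∫ u in Ioi (0:ℝ), G m u
      = (∫ u in Ioo (0:ℝ) (1/m), G m u) + ∫ u in Ici (1/m), G m u := by
    rw [← MeasureTheory.setIntegral_union]
    · rw [Set.Ioo_union_Ici_eq_Ioi (by positivity : (0:ℝ) < 1/m)]
    · apply Set.disjoint_left.mpr
      intro a ha ha'
      exact absurd (Set.mem_Ici.mp ha') (not_le.mpr ha.2)
    · exact measurableSet_Ici
    · exact G_integrableOn m hm hm1 _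
    · exact G_integrableOn m hm hm1 _
  rw [hsplit, MeasureTheory.integral_Ici_eq_integral_Ioi, ← hrefl]
  ring

lemma arsinh_integral (M : ℝ) (hM : 0 < M) :
    ∫ u in Ioo (0:ℝ) M, (√(1+u^2))⁻¹ = arsinh M := by
  have h : ∫ u in (0:ℝ)..M, (√(1+u^2))⁻¹ = arsinh M - arsinh 0 := by
    apply intervalIntegral.integral_eq_sub_of_hasDerivAt
    · intro u _
      exact Real.hasDerivAt_arsinh u
    · apply Continuous.intervalIntegrable
      apply Continuous.inv₀ (continuous_const.add (continuous_id.pow 2)).sqrt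
      intro u
      exact (Real.sqrt_pos.mpr (show (0:ℝ) < 1 + u^2 by positivity)).ne'
  rw [Real.arsinh_zero, sub_zero] at h
  rw [← h, intervalIntegral.integral_of_le hM.le, MeasureTheory.integral_Ioc_eq_integral_Ioo]

lemma A_bounds (m : ℝ) (hm : 0 < m) (hm1 : m ≤ 1) :
    (√(1+m^2))⁻¹ * arsinh (1/m) ≤ ∫ u in Ioo (0:ℝ) (1/m), G m u ∧
    (∫ u in Ioo (0:ℝ) (1/m), G m u) ≤ arsinh (1/m) := by
  have hicont : Continuous (fun u : ℝ => (√(1+u^2))⁻¹) := by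
    apply Continuous.inv₀ (continuous_const.add (continuous_id.pow 2)).sqrt
    intro u; exact (Real.sqrt_pos.mpr (show (0:ℝ) < 1 + u^2 by positivity)).ne'
  constructor
  · rw [show (√(1+m^2))⁻¹ * arsinh (1/m) = ∫ u in Ioo (0:ℝ) (1/m), (√(1+m^2))⁻¹ * (√(1+u^2))⁻¹ by
      rw [MeasureTheory.integral_const_mul, arsinh_integral (1/m) (by positivity)]]
    apply MeasureTheory.setIntegral_mono_on
    · apply IntegrableOn.mono_set (((continuous_const.mul hicont).intervalIntegrable 0 (1/m)).1)
      exact Set.Ioo_subset_Ioc_self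
    · exact G_integrableOn m hm hm1 _
    · exact measurableSet_Ioo
    · intro u hu
      unfold G
      have h1 : (0:ℝ) < 1 + u^2 := by positivity
      have h2 : (0:ℝ) < 1 + m^4*u^2 := by positivity
      have key : 1 + m^4*u^2 ≤ 1 + m^2 := by
        have hu2 : u^2 ≤ (1/m)^2 := pow_le_pow_left₀ hu.1.le hu.2.le 2
        have : m^4 * u^2 ≤ m^2 := by
          calc m^4 * u^2 ≤ m^4 * (1/m)^2 := by
                apply mul_le_mul_of_nonneg_left hu2 (by positivity)
            _ = m^2 := by field_simp
        linarith
      rw [mul_inv, mul_comm ((√(1+m^2))⁻¹)]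
      apply mul_le_mul_of_nonneg_left _ (by positivity)
      apply inv_anti₀ (by positivity)
      exact Real.sqrt_le_sqrt key
  · rw [show arsinh (1/m) = ∫ u in Ioo (0:ℝ) (1/m), (√(1+u^2))⁻¹ by
      rw [arsinh_integral (1/m) (by positivity)]]
    apply MeasureTheory.setIntegral_mono_on
    · exact G_integrableOn m hm hm1 _
    · apply IntegrableOn.mono_set ((hicont.intervalIntegrable 0 (1/m)).1)
      exact Set.Ioo_subset_Ioc_self
    · exact measurableSet_Ioo
    · intro u hu
      unfold G
      rw [mul_inv]
      have h1 : (0:ℝ) < 1 + u^2 := by positivity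
      have hone : (1:ℝ) ≤ √(1+m^4*u^2) := by
        have := Real.sqrt_le_sqrt (show (1:ℝ) ≤ 1+m^4*u^2 by nlinarith [sq_nonneg (m^2*u)])
        rwa [Real.sqrt_one] at this
      calc (√(1+u^2))⁻¹ * (√(1+m^4*u^2))⁻¹ ≤ (√(1+u^2))⁻¹ * 1 := by
            apply mul_le_mul_of_nonneg_left _ (by positivity)
            exact inv_le_one_of_one_le₀ hone
        _ = (√(1+u^2))⁻¹ := mul_one _

lemma arsinh_log (m : ℝ) (hm : 0 < m) : arsinh (1/m) + log m = log (1 + √(1+m^2)) := by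
  have h1 : √(1+(1/m)^2) = √(1+m^2)/m := by
    rw [show 1+(1/m)^2 = (1+m^2)/m^2 by field_simp; ring, Real.sqrt_div (by positivity),
      Real.sqrt_sq hm.le]
  have hsp : 0 < √(1+m^2) := Real.sqrt_pos.mpr (by positivity)
  have hpos : 0 < 1/m + √(1+(1/m)^2) := by
    rw [h1]; positivity
  rw [Real.arsinh, ← Real.log_mul hpos.ne' hm.ne']
  congr 1
  rw [h1]
  field_simp

lemma tendsto_U : Tendsto (fun m : ℝ => 2 * log (1 + √(1+m^2))) (𝓝[>] (0:ℝ)) (𝓝 (2 * log 2)) := by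
  have hc : ContinuousAt (fun m : ℝ => 2 * log (1 + √(1+m^2))) 0 := by
    apply ContinuousAt.mul continuousAt_const
    apply ContinuousAt.log
    · exact (continuousAt_const.add ((continuous_const.add (continuous_id.pow 2)).sqrt.continuousAt))
    · norm_num
  have ht := hc.tendsto.mono_left (nhdsWithin_le_nhds : 𝓝[>] (0:ℝ) ≤ 𝓝 0)
  norm_num at ht
  exact ht

lemma tendsto_c : Tendsto (fun m : ℝ => (√(1+m^2))⁻¹) (𝓝[>] (0:ℝ)) (𝓝 1) := by
  have hc : ContinuousAt (fun m : ℝ => (√(1+m^2))⁻¹) 0 := by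
    apply ContinuousAt.inv₀
    · exact (continuous_const.add (continuous_id.pow 2)).sqrt.continuousAt
    · norm_num
  have ht := hc.tendsto.mono_left (nhdsWithin_le_nhds : 𝓝[>] (0:ℝ) ≤ 𝓝 0)
  norm_num at ht
  exact ht

lemma tendsto_err : Tendsto (fun m : ℝ => (1 - (√(1+m^2))⁻¹) * (2 * log m)) (𝓝[>] (0:ℝ)) (𝓝 0) := by
  have hlog := tendsto_log_mul_rpow_nhdsGT_zero zero_lt_one
  simp only [Real.rpow_one] at hlog
  apply squeeze_zero_norm' (a := fun m => 2 * |log m * m|)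
  · filter_upwards [Ioo_mem_nhdsGT_of_mem (Set.left_mem_Ico.mpr zero_lt_one)] with m hm
    have hm0 : 0 < m := hm.1
    have hm1 : m < 1 := hm.2
    have hsle : √(1+m^2) ≤ 1 + m := by
      have := Real.sqrt_le_sqrt (show 1+m^2 ≤ (1+m)^2 by nlinarith)
      rwa [Real.sqrt_sq (by positivity)] at this
    have hc1 : (1:ℝ) - m ≤ (√(1+m^2))⁻¹ := by
      have hs1 : (1:ℝ) ≤ √(1+m^2) := by
        have := Real.sqrt_le_sqrt (show (1:ℝ) ≤ 1+m^2 by nlinarith)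
        rwa [Real.sqrt_one] at this
      have h2 : (√(1+m^2))⁻¹ ≥ (1+m)⁻¹ := by
        apply inv_anti₀ (by positivity) hsle
      have h3 : (1:ℝ) - m ≤ (1+m)⁻¹ := by
        rw [inv_eq_one_div, le_div_iff₀ (by positivity)]
        nlinarith
      linarith
    have hcle : (√(1+m^2))⁻¹ ≤ 1 := by
      apply inv_le_one_of_one_le₀
      have := Real.sqrt_le_sqrt (show (1:ℝ) ≤ 1+m^2 by nlinarith)
      rwa [Real.sqrt_one] at this
    rw [norm_mul, Real.norm_of_nonneg (by linarith), norm_mul]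
    calc (1 - (√(1+m^2))⁻¹) * (‖(2:ℝ)‖ * ‖log m‖) ≤ m * (2 * |log m|) := by
          apply mul_le_mul _ _ (by positivity) hm0.le
          · linarith
          · rw [Real.norm_ofNat, Real.norm_eq_abs]
      _ = 2 * |log m * m| := by
          rw [abs_mul, abs_of_pos hm0]
          ring
  · have := (hlog.norm).const_mul (2:ℝ)
    simp only [norm_mul, mul_zero] at this ⊢
    simpa [abs_mul] using this

lemma tendsto_A_log :
    Tendsto (fun m : ℝ => (∫ u in Ioi (0:ℝ), G m u) + 2 * log m) (𝓝[>] (0:ℝ))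
      (𝓝 (2 * log 2)) := by
  have hL : Tendsto (fun m : ℝ => (√(1+m^2))⁻¹ * (2 * log (1 + √(1+m^2)))
      + (1 - (√(1+m^2))⁻¹) * (2 * log m)) (𝓝[>] (0:ℝ)) (𝓝 (2 * log 2)) := by
    have := (tendsto_c.mul tendsto_U).add tendsto_err
    simpa using this
  apply tendsto_of_tendsto_of_tendsto_of_le_of_le' hL tendsto_U
  · filter_upwards [Ioo_mem_nhdsGT_of_mem (Set.left_mem_Ico.mpr zero_lt_one)] with m hm
    have hm0 : 0 < m := hm.1
    have hm1 : m ≤ 1 := hm.2.le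
    have hb := (A_bounds m hm0 hm1).1
    rw [A_split m hm0 hm1]
    have harsinh := arsinh_log m hm0
    have : (√(1+m^2))⁻¹ * (2 * log (1 + √(1+m^2)))
        = (√(1+m^2))⁻¹ * (2 * (arsinh (1/m) + log m)) := by rw [harsinh]
    rw [this]
    nlinarith [Real.sqrt_pos.mpr (show (0:ℝ) < 1+m^2 by positivity)]
  · filter_upwards [Ioo_mem_nhdsGT_of_mem (Set.left_mem_Ico.mpr zero_lt_one)] with m hm
    have hm0 : 0 < m := hm.1
    have hm1 : m ≤ 1 := hm.2.le
    have hb := (A_bounds m hm0 hm1).2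
    rw [A_split m hm0 hm1, ← arsinh_log m hm0]
    linarith

lemma tendsto_I_log :
    Tendsto (fun x : ℝ => (∫ θ in Ioo (0:ℝ) (π/2), 1 / √(1 - x * Real.sin θ ^ 2))
      + (1/2) * log (1-x)) (𝓝[<] (1:ℝ)) (𝓝 (2 * log 2)) := by
  set mf : ℝ → ℝ := fun x => √(√(1-x)) with hmf
  have hmap : Tendsto mf (𝓝[<] (1:ℝ)) (𝓝[>] (0:ℝ)) := by
    apply tendsto_nhdsWithin_of_tendsto_nhds_of_eventually_within
    · have hc : ContinuousAt mf 1 := by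
        apply Real.continuous_sqrt.continuousAt.comp
        apply Real.continuous_sqrt.continuousAt.comp
        exact (continuous_const.sub continuous_id).continuousAt
      have := hc.tendsto.mono_left (nhdsWithin_le_nhds : 𝓝[<] (1:ℝ) ≤ 𝓝 1)
      have hval : mf 1 = 0 := by rw [hmf]; norm_num
      rwa [hval] at this
    · filter_upwards [self_mem_nhdsWithin] with x hx
      have : (0:ℝ) < 1 - x := by simp only [Set.mem_Iio] at hx; linarith
      have : 0 < √(1-x) := Real.sqrt_pos.mpr this
      exact Real.sqrt_pos.mpr this
  have hcomp := tendsto_A_log.comp hmap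
  apply hcomp.congr'
  filter_upwards [Ioo_mem_nhdsLT_of_mem (Set.right_mem_Ioc.mpr zero_lt_one)] with x hx
  have hx0 : 0 ≤ x := hx.1.le
  have hx1 : x < 1 := hx.2
  have h1x : 0 < 1 - x := by linarith
  have hm0 : 0 < mf x := Real.sqrt_pos.mpr (Real.sqrt_pos.mpr h1x)
  have hm4 : (mf x)^4 = 1 - x := by
    rw [hmf]
    rw [show (√(√(1-x)))^4 = ((√(√(1-x)))^2)^2 by ring, Real.sq_sqrt (Real.sqrt_nonneg _),
      Real.sq_sqrt h1x.le]
  have hsub := subst_tan x hx0 hx1 (mf x) hm0 hm4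
  simp only [Function.comp_apply]
  rw [hsub]
  congr 1
  rw [← hm4, Real.log_pow]
  push_cast
  ring

noncomputable def ee (k : ℕ) : ℝ := 1/(π*(k+1)) - bb (k+1)

lemma ee_nonneg (k : ℕ) : 0 ≤ ee k := by
  have h := bb_upper (k+1)
  have hb := bb_pos (k+1)
  have hπ := pi_pos
  have hk : ((k+1:ℕ):ℝ) = (k:ℝ)+1 := by push_cast; ring
  rw [hk] at h
  unfold ee
  rw [sub_nonneg, le_div_iff₀ (by positivity)]
  nlinarith

lemma ee_le (k : ℕ) : ee k ≤ 1/(3*((k:ℝ)+1)^2) := by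
  have h := bb_lower (k+1)
  have hπ := pi_pos
  have hπ3 : (3:ℝ) < π := by have := pi_gt_three; linarith
  have hk : ((k+1:ℕ):ℝ) = (k:ℝ)+1 := by push_cast; ring
  rw [hk] at h
  have hbge : 1/(π*((k:ℝ)+1+1/3)) ≤ bb (k+1) := by
    rw [div_le_iff₀ (by positivity)]
    nlinarith
  unfold ee
  have h3 : 3*π ≤ π^2 := by nlinarith
  have hcast : (0:ℝ) ≤ (k:ℝ) := Nat.cast_nonneg k
  have : 1/(π*((k:ℝ)+1)) - 1/(π*((k:ℝ)+1+1/3)) ≤ 1/(3*((k:ℝ)+1)^2) := by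
    rw [div_sub_div _ _ (by positivity) (by positivity),
      div_le_div_iff₀ (by positivity) (by positivity)]
    ring_nf
    nlinarith [h3, hcast, sq_nonneg (k:ℝ), mul_nonneg hcast hcast,
      mul_nonneg (mul_nonneg hπ.le hcast) hcast, mul_nonneg hπ.le hcast]
  linarith

lemma summable_ee : Summable ee := by
  apply Summable.of_nonneg_of_le ee_nonneg ee_le
  have h0 : Summable (fun n : ℕ => 1/(n:ℝ)^2) :=
    Real.summable_one_div_nat_pow.mpr one_lt_two
  have h1 : Summable (fun k : ℕ => 1/((k:ℝ)+1)^2) := by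
    have := (summable_nat_add_iff (f := fun n : ℕ => 1/(n:ℝ)^2) 1).mpr h0
    apply this.congr
    intro k
    push_cast
    ring_nf
  have := h1.mul_left (1/3)
  apply this.congr
  intro k
  have hk : (0:ℝ) < ((k:ℝ)+1)^2 := by positivity
  field_simp

lemma hasSum_ee_x (x : ℝ) (h0 : 0 ≤ x) (h1 : x < 1) :
    HasSum (fun k => ee k * x^(k+1))
      (1 - (2/π) * ((∫ θ in Set.Ioo (0:ℝ) (π/2), 1 / √(1 - x * sin θ ^ 2))
        + (1/2) * log (1-x))) := by
  have hbx := hasSum_bb_integral x h0 h1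
  set Ix := ∫ θ in Set.Ioo (0:ℝ) (π/2), 1 / √(1 - x * sin θ ^ 2) with hIx
  have hshift : HasSum (fun k => bb (k+1) * x^(k+1)) ((2/π) * Ix - 1) := by
    rw [hasSum_nat_add_iff (f := fun k => bb k * x^k) 1]
    convert hbx using 1
    · rfl
    simp [bb_zero]
  have hlog : HasSum (fun k : ℕ => x^(k+1)/(π*((k:ℝ)+1))) (-log (1-x)/π) := by
    have h := Real.hasSum_pow_div_log_of_abs_lt_one (x := x)
      (by rw [abs_of_nonneg h0]; exact h1)
    have h2 := h.div_const π
    apply h2.congr_fun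
    intro k
    rw [div_div]
    congr 1
    ring
  have h3 := hlog.sub hshift
  have h4 : ∀ k : ℕ, ee k * x^(k+1) = x^(k+1)/(π*((k:ℝ)+1)) - bb (k+1) * x^(k+1) := by
    intro k
    unfold ee
    ring
  have h5 := h3.congr_fun h4
  have hval : -log (1-x)/π - ((2/π) * Ix - 1)
      = 1 - (2/π) * (Ix + (1/2) * log (1-x)) := by
    have hπ := pi_pos
    field_simp
    ring
  rwa [hval] at h5

lemma log_sixteen : log 16 = 4 * log 2 := by
  rw [show (16:ℝ) = 2^4 by norm_num, Real.log_pow]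
  push_cast
  ring

lemma tsum_ee : ∑' k, ee k = 1 - log 16 / π := by
  have limit1 : Tendsto (fun x : ℝ => ∑' k, ee k * x^(k+1)) (𝓝[<] (1:ℝ)) (𝓝 (∑' k, ee k)) := by
    apply tendsto_tsum_of_dominated_convergence summable_ee
    · intro k
      have hc : Tendsto (fun x : ℝ => ee k * x^(k+1)) (𝓝 1) (𝓝 (ee k * 1^(k+1))) :=
        ((continuous_pow (k+1)).tendsto 1).const_mul (ee k)
      rw [one_pow, mul_one] at hc
      exact hc.mono_left nhdsWithin_le_nhds
    · filter_upwards [Ioo_mem_nhdsLT_of_mem (Set.right_mem_Ioc.mpr zero_lt_one)] with x hx k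
      have h0 : (0:ℝ) ≤ x := hx.1.le
      have h1 : x ≤ 1 := hx.2.le
      rw [Real.norm_of_nonneg (mul_nonneg (ee_nonneg k) (pow_nonneg h0 _))]
      calc ee k * x^(k+1) ≤ ee k * 1 := by
            apply mul_le_mul_of_nonneg_left _ (ee_nonneg k)
            exact pow_le_one₀ h0 h1
        _ = ee k := mul_one _
  have limit2 : Tendsto (fun x : ℝ => ∑' k, ee k * x^(k+1)) (𝓝[<] (1:ℝ))
      (𝓝 (1 - log 16 / π)) := by
    have hI := tendsto_I_log.const_mul (2/π)
    have h2 := hI.const_sub 1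
    have hval : 1 - 2/π * (2 * log 2) = 1 - log 16 / π := by
      rw [log_sixteen]
      ring
    rw [hval] at h2
    apply h2.congr'
    filter_upwards [Ioo_mem_nhdsLT_of_mem (Set.right_mem_Ioc.mpr zero_lt_one)] with x hx
    exact ((hasSum_ee_x x hx.1.le hx.2).tsum_eq).symm
  exact tendsto_nhds_unique limit1 limit2

theorem landau_constant_limit :
    Tendsto (fun n : ℕ =>
        (∑ k ∈ Finset.range n, ((Nat.choose (2 * k) k : ℝ) / 4 ^ k) ^ 2) - Real.log n / π)
      atTop (nhds ((Real.eulerMascheroniConstant + Real.log 16) / π)) := by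
  have hγ := Real.tendsto_harmonic_sub_log_add_one
  have hsub := tendsto_sub_atTop_nat 1
  have hγ' := hγ.comp hsub
  have hT := (summable_ee.hasSum.tendsto_sum_nat).comp hsub
  have h1 : Tendsto (fun n : ℕ => 1 + (((harmonic (n-1) : ℚ) : ℝ) - log ((n-1:ℕ)+1))/π
      - ∑ j ∈ range (n-1), ee j) atTop
      (𝓝 (1 + Real.eulerMascheroniConstant/π - ∑' k, ee k)) :=
    ((hγ'.div_const π).const_add 1).sub hT
  have hval : 1 + Real.eulerMascheroniConstant/π - ∑' k, ee k
      = (Real.eulerMascheroniConstant + Real.log 16) / π := by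
    rw [tsum_ee]
    have hπ := pi_ne_zero
    field_simp
    ring
  rw [hval] at h1
  apply h1.congr'
  filter_upwards [eventually_ge_atTop 1] with n hn
  obtain ⟨m, rfl⟩ : ∃ m, n = m + 1 := ⟨n - 1, by omega⟩
  have hm : (m + 1) - 1 = m := by omega
  rw [hm]
  have hharm : ((harmonic m : ℚ) : ℝ) = ∑ j ∈ range m, ((j:ℝ)+1)⁻¹ := by
    rw [harmonic]
    push_cast
    rfl
  have hsum : ∑ k ∈ range (m+1), ((Nat.choose (2 * k) k : ℝ) / 4 ^ k) ^ 2
      = 1 + ((harmonic m : ℚ) : ℝ)/π - ∑ j ∈ range m, ee j := by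
    have hbb : ∀ k, ((Nat.choose (2 * k) k : ℝ) / 4 ^ k) ^ 2 = bb k := fun k => rfl
    rw [Finset.sum_congr rfl (fun k _ => hbb k), Finset.sum_range_succ', bb_zero]
    have hterm : ∀ j ∈ range m, bb (j+1) = ((j:ℝ)+1)⁻¹/π - ee j := by
      intro j _
      unfold ee
      have h : ((j:ℝ)+1)⁻¹/π = 1/(π*((j:ℝ)+1)) := by
        rw [inv_eq_one_div, div_div, mul_comm]
      rw [h]
      ring
    rw [Finset.sum_congr rfl hterm, Finset.sum_sub_distrib, hharm, ← Finset.sum_div]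
    ring
  rw [hsum]
  have hc : ((m:ℝ)) + 1 = ((m+1 : ℕ) : ℝ) := by push_cast; ring
  rw [hc]
  ring
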